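/- arXiv:1705.01073 — 2 statements merged into one kernel-verified Lean document; each statement's English description precedes it below -/
import Mathlib

section
/- Along any solution of the continuous inertial mirror descent system, for every t > 0 the following integrated bound holds: ∫₀ᵗ f(x(s)) ds − t·f* ≤ V(x*) − μ(t)·(f(x(t)) − f*) + μ(0)·(f(x(0)) − f*) + (sup_{s∈[0,t]} μ'(s)) · ∫₀ᵗ (f(x(s)) − f*) ds, where V(x*) = sup_ζ (⟨ζ, x*⟩ − W(ζ)) is the Legendre–Fenchel conjugate of W evaluated at x*. -/
open RealInnerProductSpace

/-- Gradient inequality for a convex differentiable function: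
`f a + ⟪∇f a, b - a⟫ ≤ f b`. -/
lemma convex_gradient_ineq
    {H : Type*} [NormedAddCommGroup H] [InnerProductSpace ℝ H] [CompleteSpace H]
    (f : H → ℝ) (hconv : ConvexOn ℝ Set.univ f) (hdiff : Differentiable ℝ f)
    (a b : H) : f a + ⟪gradient f a, b - a⟫ ≤ f b := by
  by_cases hab : b = a
  · simp [hab]
  -- φ r = f (a + r • (b - a)) along the segment
  have hline : ∀ r : ℝ, HasDerivAt (fun r : ℝ => a + r • (b - a)) (b - a) r := by
    intro r
    simpa using (((hasDerivAt_id r).smul_const (b - a)).const_add a)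
  have hφ : HasDerivAt (fun r : ℝ => f (a + r • (b - a)))
      (⟪gradient f a, b - a⟫) 0 := by
    have h1 := (hdiff a).hasGradientAt.hasFDerivAt
    have h2 : HasDerivAt (fun r : ℝ => f (a + r • (b - a)))
        ((InnerProductSpace.toDual ℝ H (gradient f a)) (b - a)) 0 := by
      have h0 : a = a + (0:ℝ) • (b - a) := by simp
      rw [h0] at h1
      have := h1.comp_hasDerivAt 0 (hline 0)
      simpa [Function.comp_def] using this
    simpa [InnerProductSpace.toDual_apply_apply] using h2
  -- convexity of φ on ℝ
  have hφconv : ConvexOn ℝ Set.univ (fun r : ℝ => f (a + r • (b - a))) := by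
    have := hconv.comp_affineMap
      (AffineMap.lineMap a b : ℝ →ᵃ[ℝ] H)
    have hpre : ((AffineMap.lineMap a b : ℝ →ᵃ[ℝ] H)) ⁻¹' Set.univ = Set.univ := by
      simp
    rw [hpre] at this
    rw [show (fun r : ℝ => f (a + r • (b - a))) = f ∘ (AffineMap.lineMap a b : ℝ →ᵃ[ℝ] H) from ?_]
    · exact this
    funext r
    simp [Function.comp, AffineMap.lineMap_apply]
    rw [add_comm]
  have hslope := hφconv.le_slope_of_hasDerivAt (Set.mem_univ (0 : ℝ))
    (Set.mem_univ (1 : ℝ)) one_pos hφ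
  rw [slope_def_field] at hslope
  simp at hslope ⊢
  linarith

/-- Along any solution of the continuous inertial mirror descent system, for every
`t > 0` the integrated bound
`∫₀ᵗ f(x(s)) ds − t·f* ≤ V(x*) − μ(t)·(f(x(t)) − f*) + μ(0)·(f(x(0)) − f*)
  + (sup_{s∈[0,t]} μ'(s)) · ∫₀ᵗ (f(x(s)) − f*) ds`
holds, where `V(x*) = sup_ζ (⟨ζ, x*⟩ − W(ζ))`. -/
theorem imd_integrated_bound
    {H : Type*} [NormedAddCommGroup H] [InnerProductSpace ℝ H]
    [FiniteDimensional ℝ H]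
    (f W : H → ℝ) (μ : ℝ → ℝ) (ζ x : ℝ → H) (xstar : H)
    (hf_conv : ConvexOn ℝ Set.univ f)
    (hf_diff : Differentiable ℝ f)
    (hmin : ∀ y, f xstar ≤ f y)
    (hW_conv : ConvexOn ℝ Set.univ W)
    (hW_diff : Differentiable ℝ W)
    (hW_grad_cont : Continuous (gradient W))
    (hW0 : W 0 = 0) (hWgrad0 : gradient W 0 = 0)
    (hV_fin : BddAbove (Set.range fun z => ⟪z, xstar⟫ - W z))
    (hμ_diff : Differentiable ℝ μ)
    (hμ'_cont : Continuous (deriv μ))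
    (hμ_nonneg : ∀ t ≥ (0 : ℝ), 0 ≤ μ t)
    (hζ_diff : Differentiable ℝ ζ) (hx_diff : Differentiable ℝ x)
    (hζ0 : ζ 0 = 0) (hx0 : x 0 = gradient W 0)
    (hζ' : ∀ t ≥ (0 : ℝ), deriv ζ t = -gradient f (x t))
    (hmirror : ∀ t ≥ (0 : ℝ), μ t • deriv x t + x t = gradient W (ζ t))
    (hfx_cont : Continuous (fun s => f (x s)))
    (hfxμ'_cont : Continuous (fun s => f (x s) * deriv μ s))
    (hfx_diff : Differentiable ℝ (fun s => f (x s))) :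
    ∀ t > (0 : ℝ),
      (∫ s in (0 : ℝ)..t, f (x s)) - t * f xstar
        ≤ (⨆ z : H, (⟪z, xstar⟫ - W z)) - μ t * (f (x t) - f xstar)
            + μ 0 * (f (x 0) - f xstar)
            + sSup (deriv μ '' Set.Icc 0 t)
              * ∫ s in (0 : ℝ)..t, (f (x s) - f xstar) := by
  intro t ht
  set fs : ℝ := f xstar with hfs
  -- continuous integrands
  have hcont1 : Continuous (fun s => f (x s) - fs) := hfx_cont.sub continuous_const
  have hcont2 : Continuous (fun s => deriv μ s * (f (x s) - fs)) :=
    hμ'_cont.mul hcont1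
  -- the Lyapunov-type function
  set Φ : ℝ → ℝ := fun s =>
    (⟪ζ s, xstar⟫ - W (ζ s)) - (∫ u in (0:ℝ)..s, (f (x u) - fs))
      - μ s * (f (x s) - fs)
      + ∫ u in (0:ℝ)..s, deriv μ u * (f (x u) - fs) with hΦ
  -- chain rule facts
  have hWcomp : ∀ s : ℝ, HasDerivAt (fun r => W (ζ r))
      (⟪gradient W (ζ s), deriv ζ s⟫) s := by
    intro s
    have h2 : HasDerivAt (fun r => W (ζ r))
        ((InnerProductSpace.toDual ℝ H (gradient W (ζ s))) (deriv ζ s)) s :=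
      (hW_diff (ζ s)).hasGradientAt.hasFDerivAt.comp_hasDerivAt s (hζ_diff s).hasDerivAt
    simpa [InnerProductSpace.toDual_apply_apply] using h2
  have hinner : ∀ s : ℝ, HasDerivAt (fun r => ⟪ζ r, xstar⟫)
      (⟪deriv ζ s, xstar⟫) s := by
    intro s
    have := (hζ_diff s).hasDerivAt.inner ℝ (hasDerivAt_const s xstar)
    simpa using this
  have hfxchain : ∀ s : ℝ, deriv (fun r => f (x r)) s
      = ⟪gradient f (x s), deriv x s⟫ := by
    intro s
    have h2 : HasDerivAt (fun r => f (x r))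
        ((InnerProductSpace.toDual ℝ H (gradient f (x s))) (deriv x s)) s :=
      (hf_diff (x s)).hasGradientAt.hasFDerivAt.comp_hasDerivAt s (hx_diff s).hasDerivAt
    simpa [InnerProductSpace.toDual_apply_apply] using h2.deriv
  -- Φ has a derivative everywhere
  have hΦderiv : ∀ s : ℝ, HasDerivAt Φ
      ((⟪deriv ζ s, xstar⟫ - ⟪gradient W (ζ s), deriv ζ s⟫)
        - (f (x s) - fs)
        - (deriv μ s * (f (x s) - fs) + μ s * deriv (fun r => f (x r)) s)
        + deriv μ s * (f (x s) - fs)) s := by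
    intro s
    have h1 : HasDerivAt (fun r => ⟪ζ r, xstar⟫ - W (ζ r))
        (⟪deriv ζ s, xstar⟫ - ⟪gradient W (ζ s), deriv ζ s⟫) s :=
      (hinner s).sub (hWcomp s)
    have h2 : HasDerivAt (fun r => ∫ u in (0:ℝ)..r, (f (x u) - fs))
        (f (x s) - fs) s :=
      (hcont1.integral_hasStrictDerivAt 0 s).hasDerivAt
    have h3 : HasDerivAt (fun r => μ r * (f (x r) - fs))
        (deriv μ s * (f (x s) - fs) + μ s * deriv (fun r => f (x r)) s) s := by
      have := (hμ_diff s).hasDerivAt.mul ((hfx_diff s).hasDerivAt.sub_const fs)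
      simpa [mul_comm, Pi.mul_def] using this
    have h4 : HasDerivAt (fun r => ∫ u in (0:ℝ)..r, deriv μ u * (f (x u) - fs))
        (deriv μ s * (f (x s) - fs)) s :=
      (hcont2.integral_hasStrictDerivAt 0 s).hasDerivAt
    exact ((h1.sub h2).sub h3).add h4
  have hΦdiff : Differentiable ℝ Φ := fun s => (hΦderiv s).differentiableAt
  -- derivative of Φ is nonneg on (0, t)
  have hΦmono : MonotoneOn Φ (Set.Icc 0 t) := by
    apply monotoneOn_of_deriv_nonneg (convex_Icc 0 t) hΦdiff.continuous.continuousOn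
      (hΦdiff.differentiableOn)
    intro s hs
    rw [interior_Icc] at hs
    have hs0 : (0:ℝ) ≤ s := hs.1.le
    rw [(hΦderiv s).deriv]
    rw [hζ' s hs0, hfxchain s, ← hmirror s hs0]
    have hgradineq := convex_gradient_ineq f hf_conv hf_diff (x s) xstar
    have hcomm : ⟪gradient f (x s), deriv x s⟫ = ⟪deriv x s, gradient f (x s)⟫ :=
      real_inner_comm _ _
    have hexp : ⟪μ s • deriv x s + x s, -gradient f (x s)⟫
        = -(μ s * ⟪deriv x s, gradient f (x s)⟫) - ⟪x s, gradient f (x s)⟫ := by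
      rw [inner_add_left, inner_neg_right, inner_neg_right, real_inner_smul_left]
      ring
    have hx1 : ⟪-gradient f (x s), xstar⟫ = -⟪gradient f (x s), xstar⟫ := by
      rw [inner_neg_left]
    rw [hx1, hexp, hcomm]
    have hsub : ⟪gradient f (x s), xstar - x s⟫
        = ⟪gradient f (x s), xstar⟫ - ⟪gradient f (x s), x s⟫ := inner_sub_right _ _ _
    have hxsxstar : ⟪x s, gradient f (x s)⟫ = ⟪gradient f (x s), x s⟫ :=
      real_inner_comm _ _
    rw [hxsxstar]
    -- from hgradineq : f (x s) + ⟪∇f (x s), xstar - x s⟫ ≤ fs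
    rw [hsub] at hgradineq
    linarith
  have hkey : Φ 0 ≤ Φ t := hΦmono (Set.left_mem_Icc.2 ht.le)
    (Set.right_mem_Icc.2 ht.le) ht.le
  have hΦ0 : Φ 0 = -(μ 0 * (f (x 0) - fs)) := by
    simp [hΦ, hζ0, hW0]
  rw [hΦ0] at hkey
  -- bound the conjugate term
  have hVle : ⟪ζ t, xstar⟫ - W (ζ t) ≤ ⨆ z : H, (⟪z, xstar⟫ - W z) :=
    le_ciSup hV_fin (ζ t)
  -- bound the μ' integral
  set M : ℝ := sSup (deriv μ '' Set.Icc 0 t) with hM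
  have hbddM : BddAbove (deriv μ '' Set.Icc 0 t) :=
    (isCompact_Icc.image hμ'_cont).bddAbove
  have hJle : (∫ u in (0:ℝ)..t, deriv μ u * (f (x u) - fs))
      ≤ M * ∫ u in (0:ℝ)..t, (f (x u) - fs) := by
    rw [← intervalIntegral.integral_const_mul]
    apply intervalIntegral.integral_mono_on ht.le
      (hcont2.intervalIntegrable 0 t)
      ((continuous_const.mul hcont1).intervalIntegrable 0 t)
    intro u hu
    have h1 : deriv μ u ≤ M := le_csSup hbddM (Set.mem_image_of_mem _ hu)
    have h2 : 0 ≤ f (x u) - fs := sub_nonneg.2 (hmin (x u))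
    exact mul_le_mul_of_nonneg_right h1 h2
  -- rewrite LHS
  have hLHS : (∫ s in (0:ℝ)..t, f (x s)) - t * fs
      = ∫ s in (0:ℝ)..t, (f (x s) - fs) := by
    rw [intervalIntegral.integral_sub (hfx_cont.intervalIntegrable 0 t)
      (intervalIntegrable_const)]
    simp [mul_comm]
  rw [hLHS]
  simp only [hΦ] at hkey
  linarith
end

section
/- Along any solution of the continuous inertial mirror descent system with μ(t) = t (that is, ζ'(t) = −∇f(x(t)) with ζ(0) = 0 and t·x'(t) + x(t) = ∇W(ζ(t)) for all t ≥ 0, with x(0) = ∇W(0)), one has for every t > 0 the upper bound f(x(t)) − f* ≤ V(x*)·t^{−1}, where V(x*) = sup_ζ (⟨ζ, x*⟩ − W(ζ)). -/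
open RealInnerProductSpace

lemma grad_ineq' {H : Type*} [NormedAddCommGroup H] [InnerProductSpace ℝ H] [CompleteSpace H]
    {f : H → ℝ} (hc : ConvexOn ℝ Set.univ f) (hd : Differentiable ℝ f) (a b : H) :
    f a + ⟪gradient f a, b - a⟫ ≤ f b := by
  set A : ℝ →ᵃ[ℝ] H := AffineMap.lineMap a b with hA
  have hg : ConvexOn ℝ Set.univ (f ∘ A) := by
    have := hc.comp_affineMap A
    simpa using this
  have hline : HasDerivAt (fun s : ℝ => A s) (b - a) 0 := by
    have : HasDerivAt (fun s : ℝ => s • (b - a) + a) ((1 : ℝ) • (b - a)) 0 :=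
      ((hasDerivAt_id 0).smul_const (b - a)).add_const a
    simpa [hA, AffineMap.lineMap_apply, one_smul] using this
  have hA0 : A (0 : ℝ) = a := by simp [hA]
  have hA1 : A (1 : ℝ) = b := by simp [hA]
  have hF := (hd a).hasGradientAt.hasFDerivAt
  rw [← hA0] at hF
  have hder : HasDerivAt (f ∘ A) (⟪gradient f a, b - a⟫) 0 := by
    simpa [InnerProductSpace.toDual_apply_apply, hA0] using hF.comp_hasDerivAt 0 hline
  have hs := hg.le_slope_of_hasDerivAt (Set.mem_univ (0:ℝ)) (Set.mem_univ (1:ℝ))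
    zero_lt_one hder
  rw [slope_def_field] at hs
  simp [hA0, hA1] at hs
  rw [gradient, InnerProductSpace.toDual_symm_apply, map_sub]; linarith

/-- Along any solution of the continuous inertial mirror descent system with
`μ(t) = t` (i.e. `ζ'(t) = −∇f(x(t))`, `ζ(0) = 0`, `t·x'(t) + x(t) = ∇W(ζ(t))` for
all `t ≥ 0`, `x(0) = ∇W(0)`), one has for every `t > 0` the upper bound
`f(x(t)) − f* ≤ V(x*)·t⁻¹`, where `V(x*) = sup_ζ (⟨ζ, x*⟩ − W(ζ))`. -/
theorem imd_error_bound_mu_eq_t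
    {H : Type*} [NormedAddCommGroup H] [InnerProductSpace ℝ H]
    [FiniteDimensional ℝ H]
    (f W : H → ℝ) (ζ x : ℝ → H) (xstar : H)
    (hf_conv : ConvexOn ℝ Set.univ f)
    (hf_diff : Differentiable ℝ f)
    (hmin : ∀ y, f xstar ≤ f y)
    (hW_conv : ConvexOn ℝ Set.univ W)
    (hW_diff : Differentiable ℝ W)
    (hW_grad_cont : Continuous (gradient W))
    (hW0 : W 0 = 0) (hWgrad0 : gradient W 0 = 0)
    (hV_fin : BddAbove (Set.range fun z => ⟪z, xstar⟫ - W z))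
    (hζ_diff : Differentiable ℝ ζ) (hx_diff : Differentiable ℝ x)
    (hζ0 : ζ 0 = 0) (hx0 : x 0 = gradient W 0)
    (hζ' : ∀ t ≥ (0 : ℝ), deriv ζ t = -gradient f (x t))
    (hmirror : ∀ t ≥ (0 : ℝ), t • deriv x t + x t = gradient W (ζ t))
    (hfx_cont : Continuous (fun s => f (x s)))
    (hfx_diff : Differentiable ℝ (fun s => f (x s))) :
    ∀ t > (0 : ℝ),
      f (x t) - f xstar ≤ (⨆ z : H, (⟪z, xstar⟫ - W z)) * t⁻¹ := by
  intro t ht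
  set E : ℝ → ℝ := fun s => s * (f (x s) - f xstar) + (W (ζ s) - ⟪ζ s, xstar⟫) with hE
  have key : ∀ s : ℝ, HasDerivAt E
      ((f (x s) - f xstar) + s * ⟪gradient f (x s), deriv x s⟫
        + (⟪gradient W (ζ s), deriv ζ s⟫ - ⟪deriv ζ s, xstar⟫)) s := by
    intro s
    have hFx : HasDerivAt (fun u => f (x u)) (⟪gradient f (x s), deriv x s⟫) s := by
      have h := ((hf_diff (x s)).hasGradientAt.hasFDerivAt).comp_hasDerivAt s (hx_diff s).hasDerivAt
      simp only [InnerProductSpace.toDual_apply_apply] at h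
      exact h
    have h1 : HasDerivAt (fun u => u * (f (x u) - f xstar))
        ((f (x s) - f xstar) + s * ⟪gradient f (x s), deriv x s⟫) s := by
      simpa [Pi.mul_def] using (hasDerivAt_id s).mul (hFx.sub_const (f xstar))
    have h2 : HasDerivAt (fun u => W (ζ u)) (⟪gradient W (ζ s), deriv ζ s⟫) s := by
      have h := ((hW_diff (ζ s)).hasGradientAt.hasFDerivAt).comp_hasDerivAt s (hζ_diff s).hasDerivAt
      simp only [InnerProductSpace.toDual_apply_apply] at h
      exact h
    have h3 : HasDerivAt (fun u => ⟪ζ u, xstar⟫) (⟪deriv ζ s, xstar⟫) s := by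
      simpa using (hζ_diff s).hasDerivAt.inner (𝕜 := ℝ) (hasDerivAt_const s xstar)
    exact h1.add (h2.sub h3)
  have hd_nonpos : ∀ s : ℝ, 0 ≤ s →
      (f (x s) - f xstar) + s * ⟪gradient f (x s), deriv x s⟫
        + (⟪gradient W (ζ s), deriv ζ s⟫ - ⟪deriv ζ s, xstar⟫) ≤ 0 := by
    intro s hs
    have hg := grad_ineq' hf_conv hf_diff (x s) xstar
    rw [hζ' s hs, ← hmirror s hs]
    have e1 : ⟪s • deriv x s + x s, -gradient f (x s)⟫
        = -(s * ⟪gradient f (x s), deriv x s⟫) - ⟪gradient f (x s), x s⟫ := by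
      simp [inner_add_left, real_inner_smul_left, real_inner_smul_right, inner_neg_right,
        real_inner_comm]
      ring
    have e2 : ⟪-gradient f (x s), xstar⟫ = -⟪gradient f (x s), xstar⟫ := by
      simp
    rw [e1, e2]
    rw [inner_sub_right] at hg
    linarith
  have hanti : AntitoneOn E (Set.Ici (0:ℝ)) := by
    apply antitoneOn_of_deriv_nonpos (convex_Ici 0)
    · exact (Continuous.continuousOn (by
        exact (continuous_id.mul (hfx_cont.sub continuous_const)).add
          ((hW_diff.continuous.comp hζ_diff.continuous).sub
            (hζ_diff.continuous.inner continuous_const))))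
    · intro s _
      exact (key s).differentiableAt.differentiableWithinAt
    · intro s hs
      rw [interior_Ici] at hs
      rw [(key s).deriv]
      exact hd_nonpos s (le_of_lt hs)
  have hE0 : E 0 = 0 := by simp [hE, hζ0, hW0]
  have hEt : E t ≤ 0 := by
    have := hanti (Set.self_mem_Ici) (Set.mem_Ici.mpr ht.le) ht.le
    rwa [hE0] at this
  have hmain : t * (f (x t) - f xstar) ≤ ⟪ζ t, xstar⟫ - W (ζ t) := by
    simp only [hE] at hEt; linarith
  have hsup : ⟪ζ t, xstar⟫ - W (ζ t) ≤ ⨆ z : H, (⟪z, xstar⟫ - W z) :=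
    le_ciSup hV_fin (ζ t)
  rw [mul_comm, ← div_eq_inv_mul, le_div_iff₀ ht]
  nlinarith
end
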